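/- (Abstract form of the differentiated equation (2.14)–(2.15), first order.) For t ∈ [0,1]^N let u(t) ∈ H denote the unique solution of a_t(u(t), v) = ℓ_t(v) for all v ∈ H. Then the solution map t ↦ u(t) is (Fréchet) differentiable at every interior point t of [0,1]^N, and for each i ∈ {1, …, N} its partial derivative ∂_{t_i} u(t) is the unique element w_i ∈ H satisfying a_t(w_i, v) = ℓ_i(v) − b_i(u(t), v) for all v ∈ H. -/

import Mathlib

open scoped BigOperators

open InnerProductSpace in
/-- Abstract form of the differentiated equation (2.14)–(2.15), first
order: the solution map `t ↦ u(t)` is Fréchet differentiable at every interior point `t`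
of the cube `[0,1]^N`, and for each `i` the partial derivative `∂_{tᵢ} u(t)` is the unique
element `wᵢ ∈ H` satisfying `a_t(wᵢ, v) = ℓᵢ(v) − bᵢ(u(t), v)` for all `v ∈ H`. -/
theorem parametric_solution_map_differentiable_first_order
    {H : Type*} [NormedAddCommGroup H] [InnerProductSpace ℝ H] [CompleteSpace H]
    {N : ℕ} (hN : 1 ≤ N)
    (b0 : H →L[ℝ] H →L[ℝ] ℝ) (b : Fin N → H →L[ℝ] H →L[ℝ] ℝ)
    (l0 : H →L[ℝ] ℝ) (l : Fin N → H →L[ℝ] ℝ)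
    (c : ℝ) (hc : 0 < c)
    (hcoer : ∀ t : Fin N → ℝ, (∀ i, t i ∈ Set.Icc (0 : ℝ) 1) →
      ∀ v : H, c * ‖v‖ ^ 2 ≤ b0 v v + ∑ i, t i * b i v v)
    (u : (Fin N → ℝ) → H)
    (hu : ∀ t : Fin N → ℝ, (∀ i, t i ∈ Set.Icc (0 : ℝ) 1) →
      ∀ v : H, b0 (u t) v + ∑ i, t i * b i (u t) v = l0 v + ∑ i, t i * l i v) :
    ∀ t ∈ interior {s : Fin N → ℝ | ∀ i, s i ∈ Set.Icc (0 : ℝ) 1},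
      DifferentiableAt ℝ u t ∧
      ∀ i : Fin N,
        (∀ v : H,
          b0 (fderiv ℝ u t (Pi.single i 1)) v
            + ∑ j, t j * b j (fderiv ℝ u t (Pi.single i 1)) v
          = l i v - b i (u t) v) ∧
        (∀ w : H,
          (∀ v : H, b0 w v + ∑ j, t j * b j w v = l i v - b i (u t) v) →
          w = fderiv ℝ u t (Pi.single i 1)) := by
  classical
  intro t ht
  have ht' : ∀ i, t i ∈ Set.Icc (0 : ℝ) 1 := interior_subset ht
  set T0 : H →L[ℝ] H := continuousLinearMapOfBilin b0 with hT0
  set T : Fin N → (H →L[ℝ] H) := fun i => continuousLinearMapOfBilin (b i) with hT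
  set m0 : H := (toDual ℝ H).symm l0 with hm0
  set m : Fin N → H := fun i => (toDual ℝ H).symm (l i) with hm
  set A : (Fin N → ℝ) → (H →L[ℝ] H) := fun s => T0 + ∑ i, s i • T i with hA
  set Lv : (Fin N → ℝ) → H := fun s => m0 + ∑ i, s i • m i with hLv
  have hAinner : ∀ (s : Fin N → ℝ) (w v : H),
      (inner ℝ (A s w) v : ℝ) = b0 w v + ∑ i, s i * b i w v := by
    intro s w v
    simp [hA, ContinuousLinearMap.sum_apply, inner_add_left, sum_inner,
      real_inner_smul_left, continuousLinearMapOfBilin_apply, hT0, hT]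
  have hLinner : ∀ (s : Fin N → ℝ) (v : H),
      (inner ℝ (Lv s) v : ℝ) = l0 v + ∑ i, s i * l i v := by
    intro s v
    simp [hLv, inner_add_left, sum_inner, real_inner_smul_left, toDual_symm_apply, hm0, hm]
  have hcoerA : ∀ (s : Fin N → ℝ), (∀ i, s i ∈ Set.Icc (0 : ℝ) 1) →
      ∀ v : H, c * ‖v‖ ^ 2 ≤ (inner ℝ (A s v) v : ℝ) := by
    intro s hs v
    rw [hAinner]
    exact hcoer s hs v
  have hInj : ∀ (s : Fin N → ℝ), (∀ i, s i ∈ Set.Icc (0 : ℝ) 1) →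
      ∀ w : H, A s w = 0 → w = 0 := by
    intro s hs w hw
    have h1 : c * ‖w‖ ^ 2 ≤ 0 := by
      have := hcoerA s hs w
      rwa [hw, inner_zero_left] at this
    have h2 : ‖w‖ ^ 2 ≤ 0 :=
      (mul_le_mul_iff_right₀ hc).mp (h1.trans_eq (mul_zero c).symm)
    have h3 : ‖w‖ ^ 2 = 0 := le_antisymm h2 (sq_nonneg _)
    exact norm_eq_zero.mp (pow_eq_zero_iff two_ne_zero |>.mp h3)
  have hUnit : ∀ (s : Fin N → ℝ), (∀ i, s i ∈ Set.Icc (0 : ℝ) 1) → IsUnit (A s) := by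
    intro s hs
    have coerc : IsCoercive (b0 + ∑ i, s i • b i) := by
      refine ⟨c, hc, fun v => ?_⟩
      have := hcoer s hs v
      have heq : (b0 + ∑ i, s i • b i) v v = b0 v v + ∑ i, s i * b i v v := by
        simp [ContinuousLinearMap.sum_apply]
      rw [heq]
      calc c * ‖v‖ * ‖v‖ = c * ‖v‖ ^ 2 := by ring
      _ ≤ _ := this
    have hEA : (coerc.continuousLinearEquivOfBilin : H →L[ℝ] H) = A s := by
      ext w
      apply ext_inner_right ℝ
      intro v
      rw [hAinner, ContinuousLinearEquiv.coe_coe, coerc.continuousLinearEquivOfBilin_apply w v]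
      simp [ContinuousLinearMap.sum_apply]
    exact ⟨coerc.continuousLinearEquivOfBilin.toUnit, hEA⟩
  have hsol : ∀ (s : Fin N → ℝ), (∀ i, s i ∈ Set.Icc (0 : ℝ) 1) → A s (u s) = Lv s := by
    intro s hs
    apply ext_inner_right ℝ
    intro v
    rw [hAinner, hLinner]
    exact hu s hs v
  set g : (Fin N → ℝ) → H := fun s => Ring.inverse (A s) (Lv s) with hg
  have heq : ∀ (s : Fin N → ℝ), (∀ i, s i ∈ Set.Icc (0 : ℝ) 1) → u s = g s := by
    intro s hs
    have hun := hUnit s hs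
    have : (Ring.inverse (A s) * A s) (u s) = u s := by
      rw [Ring.inverse_mul_cancel _ hun]; rfl
    calc u s = (Ring.inverse (A s) * A s) (u s) := this.symm
    _ = Ring.inverse (A s) (A s (u s)) := rfl
    _ = Ring.inverse (A s) (Lv s) := by rw [hsol s hs]
  have hev : u =ᶠ[nhds t] g :=
    Filter.eventually_of_mem (isOpen_interior.mem_nhds ht)
      fun s hs => heq s (interior_subset hs)
  -- derivatives of A and Lv
  set D : (Fin N → ℝ) →L[ℝ] (H →L[ℝ] H) :=
    ∑ i, (ContinuousLinearMap.proj i).smulRight (T i) with hD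
  set DL : (Fin N → ℝ) →L[ℝ] H :=
    ∑ i, (ContinuousLinearMap.proj i).smulRight (m i) with hDL
  have hAfd : ∀ s, HasFDerivAt A D s := by
    intro s
    have hAe : A = fun s => T0 + D s := by
      funext s
      simp [hA, hD, ContinuousLinearMap.sum_apply]
    rw [hAe]
    exact D.hasFDerivAt.const_add T0
  have hLfd : ∀ s, HasFDerivAt Lv DL s := by
    intro s
    have hLe : Lv = fun s => m0 + DL s := by
      funext s
      simp [hLv, hDL, ContinuousLinearMap.sum_apply]
    rw [hLe]
    exact DL.hasFDerivAt.const_add m0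
  have hDsingle : ∀ i, D (Pi.single i 1) = T i := by
    intro i
    simp [hD, ContinuousLinearMap.sum_apply, Pi.single_apply, Finset.sum_ite_eq']
  have hDLsingle : ∀ i, DL (Pi.single i 1) = m i := by
    intro i
    simp [hDL, ContinuousLinearMap.sum_apply, Pi.single_apply, Finset.sum_ite_eq']
  have hgdiff : DifferentiableAt ℝ g t := by
    have h1 : DifferentiableAt ℝ (fun s => Ring.inverse (A s)) t :=
      (differentiableAt_inverse (hUnit t ht')).comp t (hAfd t).differentiableAt
    exact h1.clm_apply (hLfd t).differentiableAt
  have hud : DifferentiableAt ℝ u t := hgdiff.congr_of_eventuallyEq hev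
  refine ⟨hud, fun i => ?_⟩
  set u' := fderiv ℝ u t with hu'
  -- differentiate the equation
  set Φ : (Fin N → ℝ) → H := fun s => A s (u s) - Lv s with hΦdef
  have hΦfd : HasFDerivAt Φ ((A t).comp u' + D.flip (u t) - DL) t :=
    ((hAfd t).clm_apply hud.hasFDerivAt).sub (hLfd t)
  have hΦ0 : Φ =ᶠ[nhds t] fun _ => (0 : H) :=
    Filter.eventually_of_mem (isOpen_interior.mem_nhds ht) fun s hs => by
      have := hsol s (interior_subset hs)
      simp [hΦdef, this]
  have hΦ' : ((A t).comp u' + D.flip (u t) - DL : (Fin N → ℝ) →L[ℝ] H) = 0 := by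
    rw [← hΦfd.fderiv, hΦ0.fderiv_eq]
    exact fderiv_const_apply 0
  have hkey : A t (u' (Pi.single i 1)) = m i - T i (u t) := by
    have := congrFun (congrArg DFunLike.coe hΦ') (Pi.single i 1)
    simp only [ContinuousLinearMap.sub_apply, ContinuousLinearMap.add_apply,
      ContinuousLinearMap.comp_apply, ContinuousLinearMap.flip_apply,
      ContinuousLinearMap.zero_apply] at this
    rw [hDsingle, hDLsingle] at this
    have : A t (u' (Pi.single i 1)) + T i (u t) - m i = 0 := this
    linear_combination (norm := abel) this
  have hmain : ∀ v : H, b0 (u' (Pi.single i 1)) v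
      + ∑ j, t j * b j (u' (Pi.single i 1)) v = l i v - b i (u t) v := by
    intro v
    rw [← hAinner t, hkey, inner_sub_left]
    rw [show (inner ℝ (m i) v : ℝ) = l i v from toDual_symm_apply,
      show (inner ℝ (T i (u t)) v : ℝ) = b i (u t) v from continuousLinearMapOfBilin_apply _ _ _]
  refine ⟨hmain, fun w hw => ?_⟩
  have hAw : A t w = A t (u' (Pi.single i 1)) := by
    apply ext_inner_right ℝ
    intro v
    rw [hAinner, hAinner, hw v, hmain v]
  have : A t (w - u' (Pi.single i 1)) = 0 := by
    rw [map_sub, hAw, sub_self]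
  have := hInj t ht' _ this
  exact sub_eq_zero.mp this
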